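/- Let L, ν be natural numbers with ν+1 < L, and let h ∈ ℂ^L, f ∈ ℂ^{ν+1}, b ∈ ℂ^{L−ν−1}, N0 > 0, σ ∈ [0,1]. Assume F(ω) ≠ 0 for all ω ∈ [−π,π]. Then for every measurable function W : [−π,π] → ℂ with ∫_{−π}^{π} |W(ω)|² dω < ∞, one has I_LB(W,F,B) ≤ I_LB(W★,F,B), where W★(ω) = conj(H(ω))·(1+|F(ω)|² + σ·conj(F(ω))·B(ω))/(conj(F(ω))·(N0+|H(ω)|²)). -/

import Mathlib

open Complex Real MeasureTheory

/-- DTFT of the channel taps `h ∈ ℂ^L`. -/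
noncomputable def Hdtft {L : ℕ} (h : Fin L → ℂ) (ω : ℝ) : ℂ :=
  ∑ ℓ : Fin L, h ℓ * Complex.exp (Complex.I * (ω : ℂ) * ((ℓ : ℕ) : ℂ))

/-- DTFT of the target-response taps `f ∈ ℂ^{ν+1}`. -/
noncomputable def Fdtft {ν : ℕ} (f : Fin (ν + 1) → ℂ) (ω : ℝ) : ℂ :=
  ∑ k : Fin (ν + 1), f k * Complex.exp (Complex.I * (ω : ℂ) * ((k : ℕ) : ℂ))

/-- DTFT of the feedback-filter taps `b ∈ ℂ^{L−ν−1}` (supported on taps ν+1,…,L−1). -/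
noncomputable def Bdtft {L ν : ℕ} (b : Fin (L - ν - 1) → ℂ) (ω : ℝ) : ℂ :=
  ∑ j : Fin (L - ν - 1), b j * Complex.exp (Complex.I * (ω : ℂ) * ((ν + 1 + (j : ℕ) : ℕ) : ℂ))

/-- The quantity `Λ(ω)` appearing in the MILB. -/
noncomputable def Lam (N0 σ : ℝ) (W H F B : ℝ → ℂ) (ω : ℝ) : ℝ :=
  ‖F ω * W ω‖ ^ 2 * (N0 + ‖H ω‖ ^ 2) +
    σ * ‖F ω * B ω‖ ^ 2 -
    2 * σ * ‖F ω‖ ^ 2 * (H ω * W ω * (starRingEnd ℂ) (B ω)).re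

/-- The mutual-information lower bound functional `I_LB(W,F,B)`. -/
noncomputable def ILB (N0 σ : ℝ) (W H F B : ℝ → ℂ) : ℝ :=
  (1 / (2 * π)) *
      ∫ ω in (-π)..π,
        (Real.log (1 + ‖F ω‖ ^ 2) - ‖F ω‖ ^ 2 -
          Lam N0 σ W H F B ω / (1 + ‖F ω‖ ^ 2)) +
    (1 / π) *
      ∫ ω in (-π)..π, ((starRingEnd ℂ) (F ω) * (W ω * H ω - (σ : ℂ) * B ω)).re

/-- The optimal prefilter `W★` of Theorem 1. -/
noncomputable def Wstar (N0 σ : ℝ) (H F B : ℝ → ℂ) (ω : ℝ) : ℂ :=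
  (starRingEnd ℂ) (H ω) *
      (1 + (‖F ω‖ ^ 2 : ℂ) + (σ : ℂ) * (starRingEnd ℂ) (F ω) * B ω) /
    ((starRingEnd ℂ) (F ω) * ((N0 : ℂ) + (‖H ω‖ ^ 2 : ℂ)))

/- ### auxiliary lemmas -/

lemma contH' {L : ℕ} (h : Fin L → ℂ) : Continuous (Hdtft h) := by
  unfold Hdtft; fun_prop

lemma contF' {ν : ℕ} (f : Fin (ν + 1) → ℂ) : Continuous (Fdtft f) := by
  unfold Fdtft; fun_prop

lemma contB' {L ν : ℕ} (b : Fin (L - ν - 1) → ℂ) : Continuous (Bdtft (L := L) (ν := ν) b) := by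
  unfold Bdtft; fun_prop

lemma quad (a : ℝ) (ha : 0 < a) (z w c : ℂ) (hc : ((2*a : ℝ) : ℂ) * c = (starRingEnd ℂ) z) :
    -a * Complex.normSq w + (z * w).re ≤ -a * Complex.normSq c + (z * c).re := by
  have hzre : z.re = 2*a*c.re := by
    have := congrArg Complex.re hc; simpa using this.symm
  have hzim : z.im = -(2*a*c.im) := by
    have := congrArg Complex.im hc
    simp at this; linarith
  have key : -a * Complex.normSq c + (z*c).re - (-a * Complex.normSq w + (z*w).re)
      = a * Complex.normSq (w - c) := by
    simp [Complex.normSq_apply, Complex.mul_re, Complex.sub_re, Complex.sub_im, hzre, hzim]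
    ring
  nlinarith [mul_nonneg ha.le (Complex.normSq_nonneg (w - c))]

lemma decomp (N0 σ : ℝ) (F H B w : ℂ) :
    (Real.log (1 + ‖F‖ ^ 2) - ‖F‖ ^ 2
      - (‖F * w‖ ^ 2 * (N0 + ‖H‖ ^ 2) + σ * ‖F * B‖ ^ 2
         - 2 * σ * ‖F‖ ^ 2 * (H * w * (starRingEnd ℂ) B).re) / (1 + ‖F‖ ^ 2))
    + 2 * ((starRingEnd ℂ) F * (w * H - (σ : ℂ) * B)).re
    = -(Complex.normSq F * (N0 + Complex.normSq H) / (1 + Complex.normSq F)) * Complex.normSq w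
      + (((((2 * σ * Complex.normSq F / (1 + Complex.normSq F)) : ℝ) : ℂ) * (H * (starRingEnd ℂ) B)
          + 2 * (starRingEnd ℂ) F * H) * w).re
      + (Real.log (1 + ‖F‖ ^ 2) - ‖F‖ ^ 2
         - σ * Complex.normSq (F * B) / (1 + Complex.normSq F)
         - 2 * σ * ((starRingEnd ℂ) F * B).re) := by
  have hd : (0:ℝ) < 1 + Complex.normSq F :=
    add_pos_of_pos_of_nonneg one_pos (Complex.normSq_nonneg F)
  simp only [Complex.sq_norm, Complex.normSq_apply, Complex.mul_re, Complex.mul_im,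
    Complex.add_re, Complex.add_im, Complex.sub_re, Complex.sub_im, Complex.conj_re,
    Complex.conj_im, Complex.ofReal_re, Complex.ofReal_im, Complex.re_ofNat, Complex.im_ofNat]
  field_simp
  ring

lemma wstar_eq (N0 σ : ℝ) (hN0 : 0 < N0) (F H B : ℂ) (hF : F ≠ 0) :
    (((2 * (Complex.normSq F * (N0 + Complex.normSq H) / (1 + Complex.normSq F))) : ℝ) : ℂ) *
      ((starRingEnd ℂ) H * (1 + (‖F‖ ^ 2 : ℂ) + (σ : ℂ) * (starRingEnd ℂ) F * B) /
        ((starRingEnd ℂ) F * ((N0 : ℂ) + (‖H‖ ^ 2 : ℂ))))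
    = (starRingEnd ℂ) ((((2 * σ * Complex.normSq F / (1 + Complex.normSq F)) : ℝ) : ℂ) *
        (H * (starRingEnd ℂ) B) + 2 * (starRingEnd ℂ) F * H) := by
  have h1 : (starRingEnd ℂ) F ≠ 0 := by simpa using hF
  have h3 : (1 + Complex.normSq F : ℝ) ≠ 0 :=
    ne_of_gt (add_pos_of_pos_of_nonneg one_pos (Complex.normSq_nonneg F))
  have h2 : ((N0 : ℂ) + ((‖H‖ ^ 2 : ℝ) : ℂ)) ≠ 0 := by
    rw [← Complex.ofReal_add, Complex.ofReal_ne_zero]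
    have : (0:ℝ) ≤ ‖H‖ ^ 2 := by positivity
    linarith
  have eF : ((Complex.normSq F : ℝ) : ℂ) = F * (starRingEnd ℂ) F := (Complex.mul_conj F).symm
  have eH : ((Complex.normSq H : ℝ) : ℂ) = H * (starRingEnd ℂ) H := (Complex.mul_conj H).symm
  simp only [← Complex.ofReal_pow, Complex.sq_norm] at h2 ⊢
  push_cast
  rw [eH] at h2
  rw [eF, eH]
  have hd : (1 : ℂ) + F * (starRingEnd ℂ) F ≠ 0 := by
    rw [← eF, ← Complex.ofReal_one, ← Complex.ofReal_add]
    exact Complex.ofReal_ne_zero.mpr h3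
  simp only [map_add, map_mul, map_div₀, Complex.conj_conj, Complex.conj_ofReal, map_ofNat, map_one]
  field_simp
  have hinv : (1 + F * (starRingEnd ℂ) F)⁻¹ * (1 + F * (starRingEnd ℂ) F) = 1 :=
    inv_mul_cancel₀ hd
  ring

/-- pointwise optimality -/
lemma pointwise (N0 σ : ℝ) (hN0 : 0 < N0) (F H B w : ℂ) (hF : F ≠ 0) :
    (Real.log (1 + ‖F‖ ^ 2) - ‖F‖ ^ 2
      - (‖F * w‖ ^ 2 * (N0 + ‖H‖ ^ 2) + σ * ‖F * B‖ ^ 2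
         - 2 * σ * ‖F‖ ^ 2 * (H * w * (starRingEnd ℂ) B).re) / (1 + ‖F‖ ^ 2))
    + 2 * ((starRingEnd ℂ) F * (w * H - (σ : ℂ) * B)).re
    ≤
    (Real.log (1 + ‖F‖ ^ 2) - ‖F‖ ^ 2
      - (‖F * ((starRingEnd ℂ) H *
            (1 + (‖F‖ ^ 2 : ℂ) + (σ : ℂ) * (starRingEnd ℂ) F * B) /
          ((starRingEnd ℂ) F * ((N0 : ℂ) + (‖H‖ ^ 2 : ℂ))))‖ ^ 2 * (N0 + ‖H‖ ^ 2)
         + σ * ‖F * B‖ ^ 2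
         - 2 * σ * ‖F‖ ^ 2 * (H * ((starRingEnd ℂ) H *
            (1 + (‖F‖ ^ 2 : ℂ) + (σ : ℂ) * (starRingEnd ℂ) F * B) /
          ((starRingEnd ℂ) F * ((N0 : ℂ) + (‖H‖ ^ 2 : ℂ)))) * (starRingEnd ℂ) B).re)
        / (1 + ‖F‖ ^ 2))
    + 2 * ((starRingEnd ℂ) F * (((starRingEnd ℂ) H *
            (1 + (‖F‖ ^ 2 : ℂ) + (σ : ℂ) * (starRingEnd ℂ) F * B) /
          ((starRingEnd ℂ) F * ((N0 : ℂ) + (‖H‖ ^ 2 : ℂ)))) * H - (σ : ℂ) * B)).re := by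
  have ha : 0 < Complex.normSq F * (N0 + Complex.normSq H) / (1 + Complex.normSq F) :=
    div_pos (mul_pos (Complex.normSq_pos.mpr hF)
      (add_pos_of_pos_of_nonneg hN0 (Complex.normSq_nonneg H)))
      (add_pos_of_pos_of_nonneg one_pos (Complex.normSq_nonneg F))
  have hc := wstar_eq N0 σ hN0 F H B hF
  rw [decomp N0 σ F H B w, decomp N0 σ F H B ((starRingEnd ℂ) H *
            (1 + (‖F‖ ^ 2 : ℂ) + (σ : ℂ) * (starRingEnd ℂ) F * B) /
          ((starRingEnd ℂ) F * ((N0 : ℂ) + (‖H‖ ^ 2 : ℂ))))]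
  exact add_le_add_left (quad _ ha _ _ _ hc) _

/- ### integrability -/

lemma absW_int {W : ℝ → ℂ} (hWm : Measurable W)
    (hW2 : IntegrableOn (fun ω => ‖W ω‖ ^ 2) (Set.Icc (-π) π)) :
    IntegrableOn (fun ω => ‖W ω‖) (Set.Icc (-π) π) := by
  have hconst : IntegrableOn (fun _ : ℝ => (1:ℝ)) (Set.Icc (-π) π) :=
    integrableOn_const measure_Icc_lt_top.ne
  refine Integrable.mono' (hconst.add hW2) ?_ ?_
  · exact (continuous_norm.measurable.comp hWm).aestronglyMeasurable
  · filter_upwards with ω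
    have h0 : (0:ℝ) ≤ ‖W ω‖ := norm_nonneg _
    rw [Real.norm_eq_abs, _root_.abs_of_nonneg h0]
    simp only [Pi.add_apply]
    nlinarith

lemma re_mul_int {W : ℝ → ℂ} (hWm : Measurable W)
    (hW1 : IntegrableOn (fun ω => ‖W ω‖) (Set.Icc (-π) π))
    (c : ℝ → ℂ) (hc : Continuous c) :
    IntegrableOn (fun ω => (c ω * W ω).re) (Set.Icc (-π) π) := by
  obtain ⟨M, hM⟩ := isCompact_Icc.exists_bound_of_continuousOn hc.continuousOn
  refine Integrable.mono' (hW1.const_mul M) ?_ ?_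
  · exact (Complex.measurable_re.comp (hc.measurable.mul hWm)).aestronglyMeasurable
  · rw [ae_restrict_iff' measurableSet_Icc]
    filter_upwards with ω hω
    calc ‖(c ω * W ω).re‖ = |(c ω * W ω).re| := rfl
      _ ≤ ‖c ω * W ω‖ := Complex.abs_re_le_norm _
      _ = ‖c ω‖ * ‖W ω‖ := norm_mul _ _
      _ ≤ M * ‖W ω‖ := by
          refine mul_le_mul_of_nonneg_right ?_ (norm_nonneg _)
          simpa using hM ω hω

lemma mul_sq_int {W : ℝ → ℂ} (hWm : Measurable W)
    (hW2 : IntegrableOn (fun ω => ‖W ω‖ ^ 2) (Set.Icc (-π) π))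
    (c : ℝ → ℝ) (hc : Continuous c) :
    IntegrableOn (fun ω => c ω * ‖W ω‖ ^ 2) (Set.Icc (-π) π) := by
  obtain ⟨M, hM⟩ := isCompact_Icc.exists_bound_of_continuousOn hc.continuousOn
  refine Integrable.mono' (hW2.const_mul M) ?_ ?_
  · exact (hc.measurable.mul ((continuous_norm.measurable.comp hWm).pow_const 2)).aestronglyMeasurable
  · rw [ae_restrict_iff' measurableSet_Icc]
    filter_upwards with ω hω
    have h2 : (0:ℝ) ≤ ‖W ω‖ ^ 2 := by positivity
    calc ‖c ω * ‖W ω‖ ^ 2‖ = |c ω| * ‖W ω‖ ^ 2 := by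
          rw [Real.norm_eq_abs, abs_mul, _root_.abs_of_nonneg h2]
      _ ≤ M * ‖W ω‖ ^ 2 := by
          refine mul_le_mul_of_nonneg_right ?_ h2
          simpa [Real.norm_eq_abs] using hM ω hω

lemma int_g1 (N0 σ : ℝ) {Hf Ff Bf W : ℝ → ℂ} (hHc : Continuous Hf) (hFc : Continuous Ff)
    (hBc : Continuous Bf) (hWm : Measurable W)
    (hW2 : IntegrableOn (fun ω => ‖W ω‖ ^ 2) (Set.Icc (-π) π)) :
    IntegrableOn (fun ω => Real.log (1 + ‖Ff ω‖ ^ 2) - ‖Ff ω‖ ^ 2 -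
      Lam N0 σ W Hf Ff Bf ω / (1 + ‖Ff ω‖ ^ 2)) (Set.Icc (-π) π) := by
  have hd : ∀ ω, (0:ℝ) < 1 + ‖Ff ω‖ ^ 2 := fun ω => by positivity
  have hdc : Continuous fun ω => 1 + ‖Ff ω‖ ^ 2 :=
    continuous_const.add ((continuous_norm.comp hFc).pow 2)
  have heq : (fun ω => Real.log (1 + ‖Ff ω‖ ^ 2) - ‖Ff ω‖ ^ 2 -
      Lam N0 σ W Hf Ff Bf ω / (1 + ‖Ff ω‖ ^ 2)) = fun ω =>
      ((Real.log (1 + ‖Ff ω‖ ^ 2) - ‖Ff ω‖ ^ 2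
        - σ * ‖Ff ω * Bf ω‖ ^ 2 / (1 + ‖Ff ω‖ ^ 2))
       - (‖Ff ω‖ ^ 2 * (N0 + ‖Hf ω‖ ^ 2) / (1 + ‖Ff ω‖ ^ 2))
           * ‖W ω‖ ^ 2)
       + ((((2 * σ * ‖Ff ω‖ ^ 2 / (1 + ‖Ff ω‖ ^ 2) : ℝ) : ℂ)
           * (Hf ω * (starRingEnd ℂ) (Bf ω))) * W ω).re := by
    funext ω
    have hne := (hd ω).ne'
    simp only [Lam, map_mul, norm_mul, mul_pow, Complex.mul_re, Complex.mul_im, Complex.ofReal_re,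
      Complex.ofReal_im]
    field_simp
    ring
  rw [heq]
  have hlog : Continuous fun ω => Real.log (1 + ‖Ff ω‖ ^ 2) := by
    exact hdc.log (fun x => (hd x).ne')
  refine Integrable.add (Integrable.sub ?_ ?_) ?_
  · refine (Continuous.integrableOn_Icc ?_)
    refine (hlog.sub ((continuous_norm.comp hFc).pow 2)).sub ?_
    exact Continuous.div (continuous_const.mul ((continuous_norm.comp (hFc.mul hBc)).pow 2))
      hdc (fun ω => (hd ω).ne')
  · refine mul_sq_int hWm hW2 _ ?_
    exact Continuous.div (((continuous_norm.comp hFc).pow 2).mul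
      (continuous_const.add ((continuous_norm.comp hHc).pow 2))) hdc (fun ω => (hd ω).ne')
  · refine re_mul_int hWm (absW_int hWm hW2) _ ?_
    refine Continuous.mul (Complex.continuous_ofReal.comp ?_)
      (hHc.mul (Complex.continuous_conj.comp hBc))
    exact Continuous.div (continuous_const.mul ((continuous_norm.comp hFc).pow 2))
      hdc (fun ω => (hd ω).ne')

lemma int_g2 (σ : ℝ) {Hf Ff Bf W : ℝ → ℂ} (hHc : Continuous Hf) (hFc : Continuous Ff)
    (hBc : Continuous Bf) (hWm : Measurable W)
    (hW2 : IntegrableOn (fun ω => ‖W ω‖ ^ 2) (Set.Icc (-π) π)) :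
    IntegrableOn (fun ω => ((starRingEnd ℂ) (Ff ω) * (W ω * Hf ω - (σ : ℂ) * Bf ω)).re)
      (Set.Icc (-π) π) := by
  have heq : (fun ω => ((starRingEnd ℂ) (Ff ω) * (W ω * Hf ω - (σ : ℂ) * Bf ω)).re) = fun ω =>
      (((starRingEnd ℂ) (Ff ω) * Hf ω) * W ω).re
        - σ * ((starRingEnd ℂ) (Ff ω) * Bf ω).re := by
    funext ω
    simp only [Complex.mul_re, Complex.mul_im, Complex.sub_re, Complex.sub_im,
      Complex.ofReal_re, Complex.ofReal_im]
    ring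
  rw [heq]
  refine Integrable.sub ?_ ?_
  · exact re_mul_int hWm (absW_int hWm hW2) _ ((Complex.continuous_conj.comp hFc).mul hHc)
  · refine Continuous.integrableOn_Icc ?_
    exact continuous_const.mul (Complex.continuous_re.comp
      ((Complex.continuous_conj.comp hFc).mul hBc))

lemma final_helper (A B A' B' : ℝ) (hk : A + 2 * B ≤ A' + 2 * B') :
    1 / (2 * π) * (A + 2 * π * (1 / π * B)) ≤ 1 / (2 * π) * (A' + 2 * π * (1 / π * B')) := by
  have hπ := Real.pi_pos
  have hne : π ≠ 0 := ne_of_gt hπ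
  have e : ∀ X Y : ℝ, X + 2 * π * (1 / π * Y) = X + 2 * Y := by
    intro X Y; field_simp
  rw [e, e]
  exact mul_le_mul_of_nonneg_left hk (by positivity)


/-- Prefilter optimality in Theorem 1: for fixed target response `F` and feedback
filter `B`, the stationary prefilter `W★` globally maximizes `I_LB` over all
square-integrable prefilters. -/
theorem stmt1 (L ν : ℕ) (hLν : ν + 1 < L) (h : Fin L → ℂ) (f : Fin (ν + 1) → ℂ)
    (b : Fin (L - ν - 1) → ℂ) (N0 σ : ℝ) (hN0 : 0 < N0) (hσ0 : 0 ≤ σ) (hσ1 : σ ≤ 1)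
    (hF : ∀ ω ∈ Set.Icc (-π) π, Fdtft f ω ≠ 0) :
    ∀ W : ℝ → ℂ, Measurable W →
      IntegrableOn (fun ω => ‖W ω‖ ^ 2) (Set.Icc (-π) π) →
      ILB N0 σ W (Hdtft h) (Fdtft f) (Bdtft (L := L) (ν := ν) b) ≤
        ILB N0 σ (Wstar N0 σ (Hdtft h) (Fdtft f) (Bdtft (L := L) (ν := ν) b))
          (Hdtft h) (Fdtft f) (Bdtft (L := L) (ν := ν) b) := by
  intro W hWm hW2
  have hπ : -π ≤ π := by linarith [Real.pi_pos]
  have hHc := contH' h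
  have hFc := contF' f
  have hBc := contB' (L := L) (ν := ν) b
  -- Wstar facts
  have hnum : Continuous fun ω => (starRingEnd ℂ) (Hdtft h ω) *
      (1 + (‖Fdtft f ω‖ ^ 2 : ℂ) + (σ : ℂ) * (starRingEnd ℂ) (Fdtft f ω) *
        Bdtft (L := L) (ν := ν) b ω) := by
    refine (Complex.continuous_conj.comp hHc).mul ?_
    refine (continuous_const.add ?_).add
      ((continuous_const.mul (Complex.continuous_conj.comp hFc)).mul hBc)
    exact (Complex.continuous_ofReal.comp (continuous_norm.comp hFc)).pow 2
  have hden : Continuous fun ω => (starRingEnd ℂ) (Fdtft f ω) *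
      ((N0 : ℂ) + (‖Hdtft h ω‖ ^ 2 : ℂ)) := by
    refine (Complex.continuous_conj.comp hFc).mul ?_
    exact continuous_const.add ((Complex.continuous_ofReal.comp (continuous_norm.comp hHc)).pow 2)
  have hdenne : ∀ ω ∈ Set.Icc (-π) π, (starRingEnd ℂ) (Fdtft f ω) *
      ((N0 : ℂ) + (‖Hdtft h ω‖ ^ 2 : ℂ)) ≠ 0 := by
    intro ω hω
    refine mul_ne_zero (by simpa using hF ω hω) ?_
    have : ((N0 : ℂ) + (‖Hdtft h ω‖ ^ 2 : ℂ)) =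
        ((N0 + ‖Hdtft h ω‖ ^ 2 : ℝ) : ℂ) := by push_cast; ring
    rw [this, Complex.ofReal_ne_zero]
    have : (0:ℝ) ≤ ‖Hdtft h ω‖ ^ 2 := by positivity
    linarith
  have hWsc : ContinuousOn (Wstar N0 σ (Hdtft h) (Fdtft f) (Bdtft (L := L) (ν := ν) b))
      (Set.Icc (-π) π) := by
    have : Wstar N0 σ (Hdtft h) (Fdtft f) (Bdtft (L := L) (ν := ν) b) =
        fun ω => ((starRingEnd ℂ) (Hdtft h ω) *
      (1 + (‖Fdtft f ω‖ ^ 2 : ℂ) + (σ : ℂ) * (starRingEnd ℂ) (Fdtft f ω) *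
        Bdtft (L := L) (ν := ν) b ω)) / ((starRingEnd ℂ) (Fdtft f ω) *
      ((N0 : ℂ) + (‖Hdtft h ω‖ ^ 2 : ℂ))) := rfl
    rw [this]
    exact ContinuousOn.div hnum.continuousOn hden.continuousOn hdenne
  have hWsm : Measurable (Wstar N0 σ (Hdtft h) (Fdtft f) (Bdtft (L := L) (ν := ν) b)) :=
    hnum.measurable.div hden.measurable
  have hWs2 : IntegrableOn (fun ω =>
      ‖Wstar N0 σ (Hdtft h) (Fdtft f) (Bdtft (L := L) (ν := ν) b) ω‖ ^ 2)
      (Set.Icc (-π) π) :=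
    ContinuousOn.integrableOn_compact isCompact_Icc
      ((continuous_norm.comp_continuousOn hWsc).pow 2)
  -- integrabilities
  have hg1W := int_g1 N0 σ hHc hFc hBc hWm hW2
  have hg2W := int_g2 σ hHc hFc hBc hWm hW2
  have hg1S := int_g1 N0 σ hHc hFc hBc hWsm hWs2
  have hg2S := int_g2 σ hHc hFc hBc hWsm hWs2
  have toII : ∀ {g : ℝ → ℝ}, IntegrableOn g (Set.Icc (-π) π) →
      IntervalIntegrable g volume (-π) π := by
    intro g hg
    exact IntegrableOn.intervalIntegrable (by rwa [Set.uIcc_of_le hπ])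
  have key : (∫ ω in (-π)..π,
        ((Real.log (1 + ‖Fdtft f ω‖ ^ 2) - ‖Fdtft f ω‖ ^ 2 -
          Lam N0 σ W (Hdtft h) (Fdtft f) (Bdtft (L := L) (ν := ν) b) ω /
            (1 + ‖Fdtft f ω‖ ^ 2)) +
          2 * ((starRingEnd ℂ) (Fdtft f ω) *
            (W ω * Hdtft h ω - (σ : ℂ) * Bdtft (L := L) (ν := ν) b ω)).re))
      ≤ ∫ ω in (-π)..π,
        ((Real.log (1 + ‖Fdtft f ω‖ ^ 2) - ‖Fdtft f ω‖ ^ 2 -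
          Lam N0 σ (Wstar N0 σ (Hdtft h) (Fdtft f) (Bdtft (L := L) (ν := ν) b))
            (Hdtft h) (Fdtft f) (Bdtft (L := L) (ν := ν) b) ω /
            (1 + ‖Fdtft f ω‖ ^ 2)) +
          2 * ((starRingEnd ℂ) (Fdtft f ω) *
            (Wstar N0 σ (Hdtft h) (Fdtft f) (Bdtft (L := L) (ν := ν) b) ω * Hdtft h ω -
              (σ : ℂ) * Bdtft (L := L) (ν := ν) b ω)).re) := by
    refine intervalIntegral.integral_mono_on hπ
      ((toII hg1W).add ((toII hg2W).const_mul 2))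
      ((toII hg1S).add ((toII hg2S).const_mul 2)) ?_
    intro ω hω
    simp only [Lam, Wstar]
    exact pointwise N0 σ hN0 (Fdtft f ω) (Hdtft h ω) (Bdtft (L := L) (ν := ν) b ω) (W ω)
      (hF ω hω)
  have split : ∀ {u v : ℝ → ℝ}, IntervalIntegrable u volume (-π) π →
      IntervalIntegrable v volume (-π) π →
      (∫ ω in (-π)..π, (u ω + 2 * v ω)) =
        (∫ ω in (-π)..π, u ω) + 2 * ∫ ω in (-π)..π, v ω := by
    intro u v hu hv
    rw [intervalIntegral.integral_add hu (hv.const_mul 2),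
      intervalIntegral.integral_const_mul]
  rw [split (toII hg1W) (toII hg2W), split (toII hg1S) (toII hg2S)] at key
  have exp : ∀ (g : ℝ → ℝ) (c : ℝ), IntervalIntegrable g volume (-π) π →
      (∫ ω in (-π)..π, (g ω + c)) = (∫ ω in (-π)..π, g ω) + 2 * π * c := by
    intro g c hg
    rw [intervalIntegral.integral_add hg intervalIntegrable_const,
      intervalIntegral.integral_const]
    rw [smul_eq_mul]
    ring
  simp only [ILB]
  rw [exp _ _ (toII hg1W), exp _ _ (toII hg1S)]
  exact final_helper _ _ _ _ key
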